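/- Let p ≡ 2 (mod 3) be an odd prime and let T_p = [1/(i² - ij + j²)]_{1≤i,j≤p-1} be the matrix over F_p (entries are inverses in F_p of the residues i² - ij + j², which are nonzero mod p). Then det T_p is congruent mod p to 2 times a nonzero square; equivalently, the Legendre symbol (det T_p / p) = (2/p). -/

import Mathlib

namespace Stmt17Aux

variable {p : ℕ} [Fact p.Prime]

lemma p_facts (hodd : Odd p) (h3 : p % 3 = 2) : 5 ≤ p ∧ p % 6 = 5 := by
  have hp := (Fact.out : p.Prime)
  have h2 := hp.two_le
  have ho : p % 2 = 1 := Nat.odd_iff.mp hodd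
  constructor <;> omega

lemma three_ne (h3 : p % 3 = 2) : (3 : ZMod p) ≠ 0 := by
  have hp := (Fact.out : p.Prime)
  intro h
  have : ((3 : ℕ) : ZMod p) = 0 := by exact_mod_cast h
  rw [ZMod.natCast_eq_zero_iff] at this
  have h33 := (Nat.prime_dvd_prime_iff_eq hp (by norm_num)).mp this
  omega

lemma two_ne' (hodd : Odd p) : (2 : ZMod p) ≠ 0 := by
  have hp := (Fact.out : p.Prime)
  have hp2 := hp.two_le
  have ho : p % 2 = 1 := Nat.odd_iff.mp hodd
  intro h
  have : ((2 : ℕ) : ZMod p) = 0 := by exact_mod_cast h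
  rw [ZMod.natCast_eq_zero_iff] at this
  have h22 := Nat.le_of_dvd (by norm_num) this
  omega

lemma den_ne (hodd : Odd p) (h3 : p % 3 = 2) (t : ZMod p) : t ^ 2 - t + 1 ≠ 0 := by
  obtain ⟨hp5, hp6⟩ := p_facts hodd h3
  intro h
  have ht0 : t ≠ 0 := by
    intro h0; rw [h0] at h; norm_num at h
  have hcube : t ^ 3 = -1 := by
    have hh : (t + 1) * (t ^ 2 - t + 1) = t ^ 3 + 1 := by ring
    rw [h, mul_zero] at hh
    linear_combination -hh
  have h6 : t ^ 6 = 1 := by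
    have : t ^ 6 = (t ^ 3) ^ 2 := by ring
    rw [this, hcube]; ring
  have hp1 : t ^ (p - 1) = 1 := ZMod.pow_card_sub_one_eq_one ht0
  obtain ⟨s, hs⟩ : ∃ s, p - 1 = 6 * s + 4 := ⟨(p - 5) / 6, by omega⟩
  have h4 : t ^ 4 = 1 := by
    rw [hs, pow_add, pow_mul, h6, one_pow, one_mul] at hp1
    exact hp1
  have h2 : t ^ 2 = 1 := by
    have h64 : t ^ 6 = t ^ 4 * t ^ 2 := by ring
    rw [h6, h4, one_mul] at h64
    exact h64.symm
  have htm1 : t = -1 := by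
    have h32 : t ^ 3 = t ^ 2 * t := by ring
    rw [hcube, h2, one_mul] at h32
    exact h32.symm
  rw [htm1] at h
  have h30 : (3 : ZMod p) = 0 := by linear_combination h
  exact three_ne h3 h30

/-- The eigenvalue sums. -/
noncomputable def TS (p : ℕ) [Fact p.Prime] (a : ℕ) : ZMod p :=
  ∑ t : (ZMod p)ˣ, ((t : ZMod p)) ^ a * (((t : ZMod p)) ^ 2 - (t : ZMod p) + 1)⁻¹

lemma Qlemma (a : ℕ) :
    (∑ t : (ZMod p)ˣ, ((t : ZMod p)) ^ a) = if (p - 1) ∣ a then -1 else 0 := by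
  classical
  have := FiniteField.sum_pow_units (ZMod p) a
  rw [ZMod.card] at this
  rw [← this]

lemma rec3 (hodd : Odd p) (h3 : p % 3 = 2) (a : ℕ) :
    TS p (a + 3) + TS p a =
      (if (p - 1) ∣ (a + 1) then (-1 : ZMod p) else 0) + (if (p - 1) ∣ a then -1 else 0) := by
  rw [← Qlemma, ← Qlemma, TS, TS, ← Finset.sum_add_distrib, ← Finset.sum_add_distrib]
  apply Finset.sum_congr rfl
  intro t _
  have hd := den_ne hodd h3 (t : ZMod p)
  rw [← add_mul, mul_inv_eq_iff_eq_mul₀ hd]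
  ring

lemma TS_pair (hodd : Odd p) (h3 : p % 3 = 2) (k a b : ℕ) (hab : a + b = 2 + (p - 1) * k) :
    TS p a = TS p b := by
  rw [TS, TS, ← Equiv.sum_comp (Equiv.inv (ZMod p)ˣ)
    (fun t : (ZMod p)ˣ => ((t : ZMod p)) ^ b * (((t : ZMod p)) ^ 2 - (t : ZMod p) + 1)⁻¹)]
  apply Finset.sum_congr rfl
  intro t _
  simp only [Equiv.inv_apply]
  rw [Units.val_inv_eq_inv_val]
  set x : ZMod p := (t : ZMod p) with hx
  have hx0 : x ≠ 0 := Units.ne_zero t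
  have hxp : x ^ (p - 1) = 1 := ZMod.pow_card_sub_one_eq_one hx0
  have key : x ^ a * x ^ b = x ^ 2 := by
    rw [← pow_add, hab, pow_add, pow_mul, hxp, one_pow, mul_one]
  have hd := den_ne hodd h3 x
  have hd' := den_ne hodd h3 x⁻¹
  have e1 : (x⁻¹) ^ 2 - x⁻¹ + 1 = (x ^ 2 - x + 1) * (x ^ 2)⁻¹ := by
    field_simp
    ring
  rw [e1, mul_inv, inv_inv, inv_pow]
  have hxb : x ^ b ≠ 0 := pow_ne_zero _ hx0
  have hJ : x ^ b * (x ^ b)⁻¹ = 1 := mul_inv_cancel₀ hxb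
  linear_combination (-(x ^ a) * (x ^ 2 - x + 1)⁻¹) * hJ + ((x ^ b)⁻¹ * (x ^ 2 - x + 1)⁻¹) * key


lemma sum_units_eq (f : ZMod p → ZMod p) :
    ∑ t : (ZMod p)ˣ, f (t : ZMod p) = ∑ t ∈ Finset.univ.erase (0 : ZMod p), f t := by
  classical
  symm
  apply Finset.sum_bij (fun (x : ZMod p) (hx : x ∈ Finset.univ.erase 0) =>
    Units.mk0 x (Finset.ne_of_mem_erase hx))
  · intro a ha; exact Finset.mem_univ _
  · intro a ha b hb hab
    simpa using congrArg Units.val hab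
  · intro u _
    exact ⟨(u : ZMod p), Finset.mem_erase.2 ⟨Units.ne_zero u, Finset.mem_univ _⟩, by simp⟩
  · intro a ha; rfl

lemma sum_all_eq (f : ZMod p → ZMod p) :
    ∑ t : ZMod p, f t = f 0 + ∑ t : (ZMod p)ˣ, f (t : ZMod p) := by
  rw [sum_units_eq]
  rw [← Finset.sum_erase_add Finset.univ f (Finset.mem_univ (0 : ZMod p))]
  ring

end Stmt17Aux

namespace Stmt17Aux
variable {p : ℕ} [Fact p.Prime]

lemma base_vals (hodd : Odd p) (h3 : p % 3 = 2) :
    TS p 1 = (3 : ZMod p)⁻¹ ∧ TS p 0 = -(3 : ZMod p)⁻¹ ∧ TS p 2 = -(3 : ZMod p)⁻¹ ∧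
      TS p 3 = -(2 * (3 : ZMod p)⁻¹) := by
  obtain ⟨hp5, hp6⟩ := p_facts hodd h3
  have h3ne := three_ne h3
  have h2ne := two_ne' hodd
  have hU0 : ∑ t : ZMod p, t ^ (0:ℕ) * (t ^ 2 - t + 1)⁻¹ = TS p 0 + 1 := by
    rw [sum_all_eq (fun t : ZMod p => t ^ (0:ℕ) * (t ^ 2 - t + 1)⁻¹), TS]
    norm_num
    ring
  have hU1 : ∑ t : ZMod p, t ^ (1:ℕ) * (t ^ 2 - t + 1)⁻¹ = TS p 1 := by
    rw [sum_all_eq (fun t : ZMod p => t ^ (1:ℕ) * (t ^ 2 - t + 1)⁻¹), TS]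
    norm_num
  have hU2 : ∑ t : ZMod p, t ^ (2:ℕ) * (t ^ 2 - t + 1)⁻¹ = TS p 2 := by
    rw [sum_all_eq (fun t : ZMod p => t ^ (2:ℕ) * (t ^ 2 - t + 1)⁻¹), TS]
    norm_num
  have h02 : TS p 0 = TS p 2 := TS_pair hodd h3 0 0 2 (by simp)
  have hsum1 : ∑ t : ZMod p, (1 : ZMod p) = 0 := by
    simp [Finset.sum_const, Finset.card_univ, ZMod.card]
  have halg : TS p 2 = TS p 1 - (TS p 0 + 1) := by
    rw [← hU0, ← hU1, ← hU2]
    have per : ∀ t : ZMod p, t ^ (2:ℕ) * (t ^ 2 - t + 1)⁻¹ =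
        1 + t ^ (1:ℕ) * (t ^ 2 - t + 1)⁻¹ - t ^ (0:ℕ) * (t ^ 2 - t + 1)⁻¹ := by
      intro t
      have hd := den_ne hodd h3 t
      have hdi : (t ^ 2 - t + 1) * (t ^ 2 - t + 1)⁻¹ = 1 := mul_inv_cancel₀ hd
      linear_combination hdi
    rw [Finset.sum_congr rfl (fun t _ => per t), Finset.sum_sub_distrib,
      Finset.sum_add_distrib, hsum1]
    ring
  have hinv : (2 : ZMod p) * TS p 1 = TS p 0 + 1 := by
    have invo : Function.Involutive (fun t : ZMod p => 1 - t) := fun t => by ring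
    have hcomp := Equiv.sum_comp invo.toPerm (fun t : ZMod p => t ^ (1:ℕ) * (t ^ 2 - t + 1)⁻¹)
    simp only [Function.Involutive.coe_toPerm] at hcomp
    have hstep : ∑ t : ZMod p, (1 - t) * (t ^ 2 - t + 1)⁻¹ =
        ∑ t : ZMod p, t ^ (1:ℕ) * (t ^ 2 - t + 1)⁻¹ := by
      rw [← hcomp]
      apply Finset.sum_congr rfl
      intro t _
      rw [show (1 - t) ^ 2 - (1 - t) + 1 = t ^ 2 - t + 1 from by ring]
      ring
    have hexp : ∑ t : ZMod p, (1 - t) * (t ^ 2 - t + 1)⁻¹ =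
        (∑ t : ZMod p, t ^ (0:ℕ) * (t ^ 2 - t + 1)⁻¹) -
          ∑ t : ZMod p, t ^ (1:ℕ) * (t ^ 2 - t + 1)⁻¹ := by
      rw [← Finset.sum_sub_distrib]
      apply Finset.sum_congr rfl
      intro t _
      ring
    linear_combination (-1) * hstep + hexp + hU0 - 2 * hU1
  -- linear algebra
  have e2 : (2 : ZMod p) * TS p 0 = TS p 1 - 1 := by
    linear_combination h02 + halg
  have hA3 : (3 : ZMod p) * TS p 0 = -1 := by
    linear_combination 2 * e2 + hinv
  have hB3 : (3 : ZMod p) * TS p 1 = 1 := by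
    linear_combination (-3) * e2 + 2 * hA3
  have hT1 : TS p 1 = (3 : ZMod p)⁻¹ := by
    field_simp
    linear_combination hB3
  have hT0 : TS p 0 = -(3 : ZMod p)⁻¹ := by
    field_simp
    linear_combination hA3
  have hT2 : TS p 2 = -(3 : ZMod p)⁻¹ := by rw [← h02]; exact hT0
  refine ⟨hT1, hT0, hT2, ?_⟩
  have hr := rec3 hodd h3 0
  have hnd : ¬ (p - 1) ∣ (0 + 1) := by
    intro hd
    have h1 := Nat.le_of_dvd (by norm_num) hd
    omega
  rw [if_neg hnd, if_pos (dvd_zero _)] at hr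
  have h33 : TS p 3 = -1 - TS p 0 := by linear_combination hr
  rw [h33, hT0]
  field_simp
  ring

end Stmt17Aux

namespace Stmt17Aux
variable {p : ℕ} [Fact p.Prime]

/-- The period-6 pattern of values. -/
noncomputable def vv (p : ℕ) (r : ℕ) : ZMod p :=
  if r = 1 ∨ r = 5 then (3 : ZMod p)⁻¹
  else if r = 2 ∨ r = 4 then -(3 : ZMod p)⁻¹
  else if r = 3 then -(2 * (3 : ZMod p)⁻¹)
  else 2 * (3 : ZMod p)⁻¹

lemma vv_ne (hodd : Odd p) (h3 : p % 3 = 2) (r : ℕ) : vv p r ≠ 0 := by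
  have h3ne := three_ne h3
  have h2ne := two_ne' hodd
  have hi : (3 : ZMod p)⁻¹ ≠ 0 := inv_ne_zero h3ne
  unfold vv
  split_ifs
  · exact hi
  · exact neg_ne_zero.mpr hi
  · exact neg_ne_zero.mpr (mul_ne_zero h2ne hi)
  · exact mul_ne_zero h2ne hi

lemma master (hodd : Odd p) (h3 : p % 3 = 2) :
    ∀ a : ℕ, 1 ≤ a → a ≤ p - 1 → TS p a = vv p (a % 6) := by
  obtain ⟨hp5, hp6⟩ := p_facts hodd h3
  obtain ⟨hT1, hT0, hT2, hT3⟩ := base_vals hodd h3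
  intro a
  induction a using Nat.strong_induction_on with
  | _ a ih =>
    intro h1 h2
    by_cases ha : a ≤ 3
    · interval_cases a
      · rw [hT1]; norm_num [vv]
      · rw [hT2]; norm_num [vv]
      · rw [hT3]; norm_num [vv]
    · push_neg at ha
      have hrec := rec3 hodd h3 (a - 3)
      rw [show a - 3 + 3 = a from by omega] at hrec
      have hq1 : ¬ (p - 1) ∣ (a - 3 + 1) := by
        intro hd
        have := Nat.le_of_dvd (by omega) hd
        omega
      have hq2 : ¬ (p - 1) ∣ (a - 3) := by
        intro hd
        have := Nat.le_of_dvd (by omega) hd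
        omega
      rw [if_neg hq1, if_neg hq2] at hrec
      have hih := ih (a - 3) (by omega) (by omega) (by omega)
      have hval : TS p a = - vv p ((a - 3) % 6) := by
        rw [← hih]; linear_combination hrec
      rw [hval]
      have hr6 : a % 6 = ((a - 3) % 6 + 3) % 6 := by omega
      have hlt : (a - 3) % 6 < 6 := Nat.mod_lt _ (by norm_num)
      set r := (a - 3) % 6 with hrdef
      interval_cases r <;> (rw [hr6]; norm_num [vv])

end Stmt17Aux

namespace Stmt17Aux
variable {p : ℕ} [Fact p.Prime]

lemma prod_eval (hodd : Odd p) (h3 : p % 3 = 2) :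
    ∃ c : ZMod p, c ≠ 0 ∧ ∏ j : Fin (p - 1), TS p ((j : ℕ) + 1) = 2 * c ^ 2 := by
  obtain ⟨hp5, hp6⟩ := p_facts hodd h3
  obtain ⟨hT1, hT0, hT2, hT3⟩ := base_vals hodd h3
  have h3ne := three_ne h3
  have h2ne := two_ne' hodd
  have hi3 : (3 : ZMod p)⁻¹ ≠ 0 := inv_ne_zero h3ne
  set n := p - 1 with hn
  obtain ⟨q, hq⟩ : ∃ q, n = 2 * q := by
    have : p % 2 = 1 := Nat.odd_iff.mp hodd
    exact ⟨n / 2, by omega⟩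
  have hq2 : 2 ≤ q := by omega
  set f : ℕ → ZMod p := fun j => TS p (j + 1) with hf
  have hP : ∏ j : Fin n, TS p ((j : ℕ) + 1) = ∏ j ∈ Finset.range n, f j :=
    Fin.prod_univ_eq_prod_range (fun j => TS p (j + 1)) n
  -- split the product
  have hs1 : ∏ j ∈ Finset.range n, f j =
      (∏ j ∈ Finset.Ico 0 q, f j) * ∏ j ∈ Finset.Ico q n, f j := by
    rw [Finset.range_eq_Ico, ← Finset.prod_Ico_consecutive f (Nat.zero_le q) (by omega)]
  have hs2 : ∏ j ∈ Finset.Ico 0 q, f j = f 0 * ∏ j ∈ Finset.Ico 1 q, f j := by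
    rw [← Finset.prod_Ico_consecutive f (by omega : (0:ℕ) ≤ 1) (by omega : 1 ≤ q)]
    congr 1
    rw [show Finset.Ico 0 1 = {0} from rfl, Finset.prod_singleton]
  have hs3 : ∏ j ∈ Finset.Ico q n, f j = f q * ∏ j ∈ Finset.Ico (q + 1) n, f j := by
    rw [← Finset.prod_Ico_consecutive f (by omega : q ≤ q + 1) (by omega : q + 1 ≤ n)]
    congr 1
    rw [Nat.Ico_succ_singleton, Finset.prod_singleton]
  have hrefl : ∏ j ∈ Finset.Ico (q + 1) n, f j = ∏ j ∈ Finset.Ico 1 q, f j := by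
    apply Finset.prod_nbij' (fun j => n - j) (fun j => n - j)
    · intro a ha
      rw [Finset.mem_Ico] at ha ⊢
      omega
    · intro a ha
      rw [Finset.mem_Ico] at ha ⊢
      omega
    · intro a ha
      rw [Finset.mem_Ico] at ha
      omega
    · intro a ha
      rw [Finset.mem_Ico] at ha
      omega
    · intro j hj
      rw [Finset.mem_Ico] at hj
      apply TS_pair hodd h3 1
      omega
  set B := ∏ j ∈ Finset.Ico 1 q, f j with hB
  have hBne : B ≠ 0 := by
    rw [hB]
    apply Finset.prod_ne_zero_iff.mpr
    intro j hj
    rw [Finset.mem_Ico] at hj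
    show TS p (j + 1) ≠ 0
    rw [master hodd h3 (j + 1) (by omega) (by omega)]
    exact vv_ne hodd h3 _
  have hfq : f q = vv p ((q + 1) % 6) := master hodd h3 (q + 1) (by omega) (by omega)
  have hProd : ∏ j : Fin n, TS p ((j : ℕ) + 1) = f 0 * f q * B ^ 2 := by
    rw [hP, hs1, hs2, hs3, hrefl]
    ring
  have hf0 : f 0 = (3 : ZMod p)⁻¹ := hT1
  have h12 : p % 12 = 5 ∨ p % 12 = 11 := by omega
  rcases h12 with h12 | h12
  · -- p ≡ 5 (mod 12): f q = -(2/3), need sqrt of -1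
    have hq6 : (q + 1) % 6 = 3 := by omega
    have hfqv : f q = -(2 * (3 : ZMod p)⁻¹) := by
      rw [hfq, hq6]; norm_num [vv]
    have hsq : IsSquare (-1 : ZMod p) := (ZMod.exists_sq_eq_neg_one_iff).mpr (by omega)
    obtain ⟨s, hs⟩ := hsq
    have hsne : s ≠ 0 := by
      intro h0
      rw [h0, mul_zero] at hs
      exact one_ne_zero (neg_eq_zero.mp hs)
    refine ⟨s * (3 : ZMod p)⁻¹ * B, by simp [hsne, hi3, hBne], ?_⟩
    rw [hProd, hf0, hfqv]
    linear_combination (2 * (3:ZMod p)⁻¹ ^ 2 * B ^ 2) * hs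
  · -- p ≡ 11 (mod 12): f q = 2/3
    have hq6 : (q + 1) % 6 = 0 := by omega
    have hfqv : f q = 2 * (3 : ZMod p)⁻¹ := by
      rw [hfq, hq6]; norm_num [vv]
    refine ⟨(3 : ZMod p)⁻¹ * B, by simp [hi3, hBne], ?_⟩
    rw [hProd, hf0, hfqv]
    ring

end Stmt17Aux

namespace Stmt17Aux
variable {p : ℕ} [Fact p.Prime]

lemma den_ne' (h : ∀ t : ZMod p, t ^ 2 - t + 1 ≠ 0) (x y : ZMod p) (hy : y ≠ 0) :
    x ^ 2 - x * y + y ^ 2 ≠ 0 := by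
  intro hz
  apply h (x * y⁻¹)
  have e1 : (x * y⁻¹) ^ 2 - x * y⁻¹ + 1 = (x ^ 2 - x * y + y ^ 2) * (y ^ 2)⁻¹ := by
    field_simp
  rw [e1, hz, zero_mul]

lemma entry_eq (h : ∀ t : ZMod p, t ^ 2 - t + 1 ≠ 0) (x y : ZMod p) (hx : x ≠ 0) (hy : y ≠ 0) :
    (x ^ 2 - x * y + y ^ 2)⁻¹ = x⁻¹ * (x * y⁻¹ * ((x * y⁻¹) ^ 2 - x * y⁻¹ + 1)⁻¹) * y⁻¹ := by
  have hd' := h (x * y⁻¹)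
  have hd2 := den_ne' h x y hy
  have e1 : (x * y⁻¹) ^ 2 - x * y⁻¹ + 1 = (x ^ 2 - x * y + y ^ 2) * (y ^ 2)⁻¹ := by
    field_simp
  rw [e1, mul_inv, inv_inv]
  field_simp

lemma term_eq (h : ∀ t : ZMod p, t ^ 2 - t + 1 ≠ 0) (x y : ZMod p) (hx : x ≠ 0) (hy : y ≠ 0)
    (j : ℕ) :
    x * (x * y)⁻¹ * ((x * (x * y)⁻¹) ^ 2 - x * (x * y)⁻¹ + 1)⁻¹ * (x * y) ^ j =
      x ^ j * (y ^ (j + 1) * (y ^ 2 - y + 1)⁻¹) := by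
  have sub1 : x * (x * y)⁻¹ = y⁻¹ := by
    rw [mul_inv, ← mul_assoc, mul_inv_cancel₀ hx, one_mul]
  rw [sub1]
  have hd := h y
  have hd' := h y⁻¹
  have e1 : (y⁻¹) ^ 2 - y⁻¹ + 1 = (y ^ 2 - y + 1) * (y ^ 2)⁻¹ := by
    field_simp
    ring
  rw [e1, mul_inv, inv_inv, mul_pow]
  field_simp
  ring

end Stmt17Aux

open Stmt17Aux in
theorem stmt17 (p : ℕ) [Fact p.Prime] (hodd : Odd p) (h3 : p % 3 = 2) :
    ∃ b : ZMod p, b ≠ 0 ∧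
      Matrix.det (Matrix.of fun i j : Fin (p - 1) =>
          ((((i : ℕ) + 1 : ℕ) ^ 2 - ((i : ℕ) + 1) * ((j : ℕ) + 1) + ((j : ℕ) + 1) ^ 2 :
            ℤ) : ZMod p)⁻¹) = 2 * b ^ 2 := by
  classical
  obtain ⟨hp5, hp6⟩ := p_facts hodd h3
  set n := p - 1 with hn
  set e : Fin n → ZMod p := fun i => ((i : ℕ) : ZMod p) + 1 with he
  have hecast : ∀ i : Fin n, e i = (((i : ℕ) + 1 : ℕ) : ZMod p) := by
    intro i; rw [he]; push_cast; ring
  have he0 : ∀ i : Fin n, e i ≠ 0 := by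
    intro i h
    rw [hecast i, ZMod.natCast_eq_zero_iff] at h
    have h1 := Nat.le_of_dvd (by omega) h
    have h2 := i.isLt
    omega
  have einj : Function.Injective e := by
    intro i j hij
    rw [hecast i, hecast j] at hij
    have hi := i.isLt
    have hj := j.isLt
    have h1 : ((i : ℕ) + 1 : ℕ) = ((j : ℕ) + 1 : ℕ) := by
      have := congrArg ZMod.val hij
      rwa [ZMod.val_cast_of_lt (by omega), ZMod.val_cast_of_lt (by omega)] at this
    exact Fin.ext (by omega)
  set uphi : Fin n → (ZMod p)ˣ := fun i => Units.mk0 (e i) (he0 i) with huphi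
  have hbij : Function.Bijective uphi := by
    rw [Fintype.bijective_iff_injective_and_card]
    constructor
    · intro i j hij
      exact einj (congrArg Units.val hij)
    · rw [Fintype.card_fin, ZMod.card_units]
  set ψ : Fin n ≃ (ZMod p)ˣ := Equiv.ofBijective uphi hbij with hψ
  -- matrices
  set D : Matrix (Fin n) (Fin n) (ZMod p) := Matrix.diagonal (fun i => (e i)⁻¹) with hD
  set C : Matrix (Fin n) (Fin n) (ZMod p) := Matrix.of fun i j =>
    (e i * (e j)⁻¹) * ((e i * (e j)⁻¹) ^ 2 - e i * (e j)⁻¹ + 1)⁻¹ with hC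
  set V : Matrix (Fin n) (Fin n) (ZMod p) := Matrix.vandermonde e with hV
  have hden : ∀ t : ZMod p, t ^ 2 - t + 1 ≠ 0 := den_ne hodd h3
  -- step A
  have hM : (Matrix.of fun i j : Fin n =>
      ((((i : ℕ) + 1 : ℕ) ^ 2 - ((i : ℕ) + 1) * ((j : ℕ) + 1) + ((j : ℕ) + 1) ^ 2 :
        ℤ) : ZMod p)⁻¹) = D * C * D := by
    ext i j
    rw [Matrix.of_apply]
    have hcast : ((((i : ℕ) + 1 : ℕ) ^ 2 - ((i : ℕ) + 1) * ((j : ℕ) + 1) + ((j : ℕ) + 1) ^ 2 :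
        ℤ) : ZMod p) = e i ^ 2 - e i * e j + e j ^ 2 := by
      rw [he]; push_cast; ring
    rw [hcast, hD, hC]
    rw [Matrix.mul_diagonal, Matrix.diagonal_mul, Matrix.of_apply]
    exact entry_eq hden (e i) (e j) (he0 i) (he0 j)
  -- step B
  have hCV : C * V = V * Matrix.diagonal (fun j : Fin n => TS p ((j : ℕ) + 1)) := by
    ext i j
    rw [Matrix.mul_apply, Matrix.mul_diagonal, hV, Matrix.vandermonde_apply]
    set x := e i with hxdef
    have hx := he0 i
    set F : (ZMod p)ˣ → ZMod p := fun u =>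
      (x * ((u : ZMod p))⁻¹) * ((x * ((u : ZMod p))⁻¹) ^ 2 - x * ((u : ZMod p))⁻¹ + 1)⁻¹ *
        ((u : ZMod p)) ^ (j : ℕ) with hF
    have step1 : ∑ k : Fin n, C i k * V k j = ∑ u : (ZMod p)ˣ, F u := by
      rw [← Equiv.sum_comp ψ F]
      apply Finset.sum_congr rfl
      intro k _
      rw [hC, hV, Matrix.of_apply, Matrix.vandermonde_apply, hF]
      rfl
    set X : (ZMod p)ˣ := uphi i with hX
    have step2 : ∑ u : (ZMod p)ˣ, F u = ∑ z : (ZMod p)ˣ, F (X * z) :=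
      (Equiv.sum_comp (Equiv.mulLeft X) F).symm
    have step3 : ∀ z : (ZMod p)ˣ, F (X * z) =
        x ^ (j : ℕ) * (((z : ZMod p)) ^ ((j : ℕ) + 1) *
          (((z : ZMod p)) ^ 2 - (z : ZMod p) + 1)⁻¹) := by
      intro z
      have hy : ((z : ZMod p)) ≠ 0 := Units.ne_zero z
      have hXz : ((X * z : (ZMod p)ˣ) : ZMod p) = x * (z : ZMod p) := by
        rw [Units.val_mul]; rfl
      simp only [hF]
      rw [hXz]
      exact term_eq hden x (z : ZMod p) hx hy (j : ℕ)
    rw [step1, step2, Finset.sum_congr rfl (fun z _ => step3 z), ← Finset.mul_sum]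
    rfl
  -- determinant chain
  have hdV : V.det ≠ 0 := by
    rw [hV, Matrix.det_vandermonde_ne_zero_iff]
    exact einj
  have hdetC : C.det = ∏ j : Fin n, TS p ((j : ℕ) + 1) := by
    have hh := congrArg Matrix.det hCV
    rw [Matrix.det_mul, Matrix.det_mul, Matrix.det_diagonal, mul_comm V.det] at hh
    exact mul_right_cancel₀ hdV hh
  obtain ⟨c, hc, hprod⟩ := prod_eval hodd h3
  refine ⟨(∏ i : Fin n, (e i)⁻¹) * c, ?_, ?_⟩
  · exact mul_ne_zero (Finset.prod_ne_zero_iff.mpr fun i _ => inv_ne_zero (he0 i)) hc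
  · rw [hM, Matrix.det_mul, Matrix.det_mul, hD, Matrix.det_diagonal, hdetC, hprod]
    ring
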